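/- Let P ≤ Γ₁ × ⋯ × Γₙ be a subgroup which virtually surjects to k-tuples for some k ≥ 2. Then N = P ∩ (Γ₁ × ⋯ × Γ_{n−1}) (the intersection of P with the sub-product of the first n−1 factors) virtually surjects to (k−1)-tuples as a subgroup of Γ₁ × ⋯ × Γ_{n−1}. -/

import Mathlib

/-- The projection of the direct product `∀ i, Γ i` onto the factors indexed by `K`,
viewed as an endomorphism (coordinates outside `K` are set to `1`). -/
def projHom {n : ℕ} (Γ : Fin n → Type*) [∀ i, Group (Γ i)] (K : Finset (Fin n)) :
    (∀ i, Γ i) →* (∀ i, Γ i) where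
  toFun g i := if i ∈ K then g i else 1
  map_one' := by funext i; by_cases hi : i ∈ K <;> simp [hi]
  map_mul' g h := by funext i; by_cases hi : i ∈ K <;> simp [hi]

/-- The sub-product `Γ_K`: elements supported on `K`. -/
def suppSubgroup {n : ℕ} (Γ : Fin n → Type*) [∀ i, Group (Γ i)] (K : Finset (Fin n)) :
    Subgroup (∀ i, Γ i) :=
  Subgroup.pi ((↑K : Set (Fin n))ᶜ) fun _ => ⊥

lemma mem_suppSubgroup_iff {n : ℕ} {Γ : Fin n → Type*} [∀ i, Group (Γ i)]
    {K : Finset (Fin n)} {x : ∀ i, Γ i} :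
    x ∈ suppSubgroup Γ K ↔ ∀ i, i ∉ K → x i = 1 := by
  simp [suppSubgroup, Subgroup.mem_pi]

lemma relindex_ne_zero_of_le_right {G : Type*} [Group G] {H K L : Subgroup G}
    (hKL : K ≤ L) (h : H.relIndex L ≠ 0) : H.relIndex K ≠ 0 := by
  rw [← Subgroup.relIndex_subgroupOf hKL]
  haveI : (H.subgroupOf L).FiniteIndex := ⟨h⟩
  exact Subgroup.FiniteIndex.index_ne_zero

theorem stmt_8 {n k : ℕ} (hk : 2 ≤ k)
    (Γ : Fin n → Type*) [∀ i, Group (Γ i)]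
    (P : Subgroup (∀ i, Γ i))
    (hvs : ∀ J : Finset (Fin n), J.card = k →
      ((P.map (projHom Γ J)).relIndex (suppSubgroup Γ J)) ≠ 0) :
    ∀ J : Finset (Fin n),
      J ⊆ Finset.univ.filter (fun i : Fin n => (i : ℕ) < n - 1) →
      J.card = k - 1 →
      (((P ⊓ suppSubgroup Γ (Finset.univ.filter (fun i : Fin n => (i : ℕ) < n - 1))).map
          (projHom Γ J)).relIndex (suppSubgroup Γ J)) ≠ 0 := by
  intro J hJM hJcard
  set M : Finset (Fin n) := Finset.univ.filter (fun i : Fin n => (i : ℕ) < n - 1) with hM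
  -- J is nonempty since k ≥ 2
  have hJne : J.Nonempty := Finset.card_pos.mp (by omega)
  obtain ⟨i0, hi0⟩ := hJne
  have hn : 1 ≤ n := Nat.one_le_iff_ne_zero.mpr (by
    rintro rfl; exact absurd i0.2 (by omega))
  set e : Fin n := ⟨n - 1, by omega⟩ with he
  have heJ : e ∉ J := by
    intro h
    have := hJM h
    simp [hM, he] at this
  set J' : Finset (Fin n) := insert e J with hJ'
  have hJ'card : J'.card = k := by
    rw [hJ', Finset.card_insert_of_notMem heJ, hJcard]; omega
  have h1 := hvs J' hJ'card
  -- key inclusion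
  have hsub : (P.map (projHom Γ J')) ⊓ suppSubgroup Γ J ≤
      (P ⊓ suppSubgroup Γ M).map (projHom Γ J) := by
    rintro x ⟨hx1, hx2⟩
    obtain ⟨g, hgP, hgx⟩ := hx1
    replace hx2 : ∀ i, i ∉ J → x i = 1 := mem_suppSubgroup_iff.mp hx2
    have hge : g e = 1 := by
      have hxe : x e = 1 := hx2 e heJ
      have h' : (projHom Γ J') g e = g e := by
        show (if e ∈ J' then g e else 1) = g e
        rw [if_pos (Finset.mem_insert_self e J)]
      rw [hgx, hxe] at h'
      exact h'.symm
    refine ⟨g, ⟨hgP, mem_suppSubgroup_iff.mpr fun i hi => ?_⟩, funext fun i => ?_⟩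
    · have hie : i = e := by
        simp only [hM, Finset.mem_filter, Finset.mem_univ, true_and, not_lt] at hi
        exact Fin.ext (by show (i:ℕ) = n - 1; have := i.2; omega)
      rw [hie, hge]
    · show (if i ∈ J then g i else 1) = x i
      by_cases hiJ : i ∈ J
      · rw [if_pos hiJ, ← hgx]
        show g i = (if i ∈ J' then g i else 1)
        rw [if_pos (Finset.mem_insert_of_mem hiJ)]
      · rw [if_neg hiJ, hx2 i hiJ]
  -- supp J ≤ supp J'
  have hsupp : suppSubgroup Γ J ≤ suppSubgroup Γ J' := by
    intro x hx
    rw [mem_suppSubgroup_iff] at hx ⊢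
    intro i hi
    exact hx i (fun h => hi (Finset.mem_insert_of_mem h))
  have h2 : (P.map (projHom Γ J')).relIndex (suppSubgroup Γ J) ≠ 0 :=
    relindex_ne_zero_of_le_right hsupp h1
  have h3 : ((P.map (projHom Γ J')) ⊓ suppSubgroup Γ J).relIndex (suppSubgroup Γ J) ≠ 0 := by
    rwa [Subgroup.inf_relIndex_right]
  intro h0
  exact h3 (Subgroup.relIndex_eq_zero_of_le_left hsub h0)
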